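/- Let R be a principal ideal domain, S = R[x_1,…,x_n] with a fixed monomial order, and let G = {f_1,…,f_m} be a Gröbner basis of the ideal I it generates. For each 1 ≤ i < j ≤ m, write u_{ij} = (l_{ij}/lc(f_i))·x^{sup(deg f_i, deg f_j)−deg f_i} where l_{ij} is a chosen least common multiple of lc(f_i) and lc(f_j), and choose q_{ij,1},…,q_{ij,m} ∈ S with S_R(f_i,f_j) = u_{ij}f_i − u_{ji}f_j = q_{ij,1}f_1+⋯+q_{ij,m}f_m such that deg(q_{ij,l}) + deg(f_l) ≼ deg(S_R(f_i,f_j)) whenever q_{ij,l}f_l ≠ 0 (taking all q_{ij,l} = 0 when S_R(f_i,f_j) = 0). Let φ : S^m → S be the S-linear map sending the standard basis vector g_l to f_l. Then the kernel of φ is generated by the elements r_{ij} = u_{ij}g_i − u_{ji}g_j − q_{ij,1}g_1 − ⋯ − q_{ij,m}g_m for 1 ≤ i < j ≤ m. -/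

import Mathlib

open MvPolynomial
open scoped MonomialOrder

namespace PaperGB

variable {n : ℕ} {R : Type*} [CommSemiring R]

/-- The degree (leading exponent) of a multivariate polynomial w.r.t. a monomial order. -/
noncomputable def mDeg (m : MonomialOrder (Fin n)) (f : MvPolynomial (Fin n) R) :
    Fin n →₀ ℕ :=
  m.toSyn.symm (f.support.sup fun d => m.toSyn d)

/-- The leading coefficient. -/
noncomputable def mLC (m : MonomialOrder (Fin n)) (f : MvPolynomial (Fin n) R) : R :=
  f.coeff (mDeg m f)

/-- The leading term. -/
noncomputable def mLT (m : MonomialOrder (Fin n)) (f : MvPolynomial (Fin n) R) :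
    MvPolynomial (Fin n) R :=
  monomial (mDeg m f) (mLC m f)

variable {R : Type*} [CommRing R]

/-- The leading term ideal. -/
noncomputable def mLTIdeal (m : MonomialOrder (Fin n)) (I : Ideal (MvPolynomial (Fin n) R)) :
    Ideal (MvPolynomial (Fin n) R) :=
  Ideal.span ((fun g => mLT m g) '' {g | g ∈ I ∧ g ≠ 0})

/-- `f` is a Gröbner basis of `I`. -/
def IsGroebnerBasis (m : MonomialOrder (Fin n)) (I : Ideal (MvPolynomial (Fin n) R))
    {k : ℕ} (f : Fin k → MvPolynomial (Fin n) R) : Prop :=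
  (∀ i, f i ≠ 0) ∧ (∀ i, f i ∈ I) ∧
    Ideal.span (Set.range fun i => mLT m (f i)) = mLTIdeal m I

/-- `g` reduces to zero modulo the family `f`. -/
def ReducesToZero (m : MonomialOrder (Fin n)) {k : ℕ} (f : Fin k → MvPolynomial (Fin n) R)
    (g : MvPolynomial (Fin n) R) : Prop :=
  ∃ p : Fin k → MvPolynomial (Fin n) R,
    g = ∑ i, p i * f i ∧
    ∀ i, p i * f i ≠ 0 → mDeg m (p i) + mDeg m (f i) ≼[m] mDeg m g

/-- A weakly regular sequence. -/
def IsWeakRegularSeq {k : ℕ} (s : Fin k → R) : Prop :=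
  ∀ i : Fin k, ∀ x : R,
    s i * x ∈ Ideal.span (s '' {j | j < i}) → x ∈ Ideal.span (s '' {j | j < i})

/-- A permutable weak regular sequence of non-units. -/
def IsPermutableWeakRegularSeq {k : ℕ} (s : Fin k → R) : Prop :=
  (∀ i, ¬ IsUnit (s i)) ∧ ∀ σ : Equiv.Perm (Fin k), IsWeakRegularSeq (s ∘ σ)

/-- `M` has a free resolution `0 → F_p → ⋯ → F_0 → M → 0` by finitely generated
free `S`-modules. -/
def HasFiniteFreeResolutionOfLength (S : Type*) [CommRing S] (M : Type*) [AddCommGroup M]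
    [Module S M] (p : ℕ) : Prop :=
  ∃ (d : ℕ → ℕ) (g : ∀ i : ℕ, (Fin (d (i + 1)) → S) →ₗ[S] (Fin (d i) → S))
    (ε : (Fin (d 0) → S) →ₗ[S] M),
    (∀ i, p < i → d i = 0) ∧
    Function.Surjective ε ∧
    LinearMap.range (g 0) = LinearMap.ker ε ∧
    ∀ i, LinearMap.range (g (i + 1)) = LinearMap.ker (g i)

/-- `M` has an infinite free resolution `⋯ → F_p → F_p → F_p → F_{p-1} → ⋯ → F_0 → M → 0`
by finitely generated free `S`-modules, whose modules are constant from stage `p` on. -/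
def HasEventuallyConstantFreeResolution (S : Type*) [CommRing S] (M : Type*) [AddCommGroup M]
    [Module S M] (p : ℕ) : Prop :=
  ∃ (d : ℕ → ℕ) (g : ∀ i : ℕ, (Fin (d (i + 1)) → S) →ₗ[S] (Fin (d i) → S))
    (ε : (Fin (d 0) → S) →ₗ[S] M),
    (∀ i, p ≤ i → d i = d p) ∧
    Function.Surjective ε ∧
    LinearMap.range (g 0) = LinearMap.ker ε ∧
    ∀ i, LinearMap.range (g (i + 1)) = LinearMap.ker (g i)

end PaperGB

open PaperGB

/-- `l` is a least common multiple of `a` and `b`, with cofactors `qa`, `qb`. -/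
def IsLcmChoice {R : Type*} [CommRing R] (a b l qa qb : R) : Prop :=
  l = a * qa ∧ l = b * qb ∧ ∀ c, a ∣ c → b ∣ c → l ∣ c

/-- The `S_R`-polynomial of `f i` and `f j`, built from cofactor data `u i j`, `v i j`
(so that `lcm (lc (f i)) (lc (f j)) = lc (f i) * u i j = lc (f j) * v i j`). -/
noncomputable def sPolyPID {n : ℕ} {R : Type*} [CommRing R] (m : MonomialOrder (Fin n))
    {M : ℕ} (f : Fin M → MvPolynomial (Fin n) R) (u v : Fin M → Fin M → R) (i j : Fin M) :
    MvPolynomial (Fin n) R :=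
  MvPolynomial.monomial ((mDeg m (f i) ⊔ mDeg m (f j)) - mDeg m (f i)) (u i j) * f i
  - MvPolynomial.monomial ((mDeg m (f i) ⊔ mDeg m (f j)) - mDeg m (f j)) (v i j) * f j


section AuxRLevel

section RLevel

variable {R : Type*} [CommRing R] [IsDomain R]

/-- Hard direction of lcm/gcd distributivity in a GCD domain. -/
theorem gcd_lcm_dvd_lcm_gcd [GCDMonoid R] {a g b : R} (ha : a ≠ 0) (hb : b ≠ 0) :
    gcd (lcm a b) (lcm g b) ∣ lcm (gcd a g) b := by
  obtain ⟨a₁, ha₁⟩ := gcd_dvd_left a b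
  obtain ⟨g₁, hg₁⟩ := gcd_dvd_left g b
  have hgab : gcd a b ≠ 0 := fun h => ha ((gcd_eq_zero_iff a b).mp h).1
  have hggb : gcd g b ≠ 0 := fun h => hb ((gcd_eq_zero_iff g b).mp h).2
  have h1 : Associated (lcm a b) (b * a₁) := by
    have heq : a * b = gcd a b * (b * a₁) := by
      conv_lhs => rw [ha₁]
      ring
    have h2 : Associated (gcd a b * lcm a b) (gcd a b * (b * a₁)) := by
      rw [← heq]; exact gcd_mul_lcm a b
    exact h2.of_mul_left (Associated.refl _) hgab
  have h1' : Associated (lcm g b) (b * g₁) := by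
    have heq : g * b = gcd g b * (b * g₁) := by
      conv_lhs => rw [hg₁]
      ring
    have h2 : Associated (gcd g b * lcm g b) (gcd g b * (b * g₁)) := by
      rw [← heq]; exact gcd_mul_lcm g b
    exact h2.of_mul_left (Associated.refl _) hggb
  have h2 : Associated (gcd (lcm a b) (lcm g b)) (b * gcd a₁ g₁) :=
    (h1.gcd h1').trans (gcd_mul_left' b a₁ g₁)
  set d := gcd a g with hd
  set e := gcd d b with he
  have heast : e ≠ 0 := fun h => hb ((gcd_eq_zero_iff d b).mp h).2
  have key : gcd a₁ g₁ * e ∣ d := by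
    apply dvd_gcd
    · have h3 : e ∣ gcd a b := dvd_gcd ((gcd_dvd_left d b).trans (gcd_dvd_left a g))
        (gcd_dvd_right d b)
      have h5 : gcd a₁ g₁ * e ∣ a₁ * gcd a b := mul_dvd_mul (gcd_dvd_left _ _) h3
      refine h5.trans (dvd_of_eq ?_)
      rw [mul_comm]; exact ha₁.symm
    · have h3 : e ∣ gcd g b := dvd_gcd ((gcd_dvd_left d b).trans (gcd_dvd_right a g))
        (gcd_dvd_right d b)
      have h5 : gcd a₁ g₁ * e ∣ g₁ * gcd g b := mul_dvd_mul (gcd_dvd_right _ _) h3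
      refine h5.trans (dvd_of_eq ?_)
      rw [mul_comm]; exact hg₁.symm
  have h4 : Associated (b * d) (lcm d b * e) := by
    rw [mul_comm b d, he, mul_comm (lcm d b) (gcd d b)]
    exact (gcd_mul_lcm d b).symm
  have h5 : b * gcd a₁ g₁ * e ∣ lcm d b * e := by
    refine dvd_trans ?_ h4.dvd
    have : b * gcd a₁ g₁ * e = b * (gcd a₁ g₁ * e) := by ring
    rw [this]
    exact mul_dvd_mul_left b key
  have h6 : b * gcd a₁ g₁ ∣ lcm d b := (mul_dvd_mul_iff_right heast).mp h5
  exact h2.dvd.trans h6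

theorem span_inf_span_singleton [GCDMonoid R] (g b : R) :
    Ideal.span {g} ⊓ Ideal.span {b} = Ideal.span {lcm g b} := by
  ext x
  simp only [Ideal.mem_inf, Ideal.mem_span_singleton]
  constructor
  · rintro ⟨h1, h2⟩; exact lcm_dvd h1 h2
  · intro h; exact ⟨(dvd_lcm_left g b).trans h, (dvd_lcm_right g b).trans h⟩

theorem mem_lcm_sup_of_mem [IsPrincipalIdealRing R] [GCDMonoid R] {a b g x : R}
    (ha : a ≠ 0) (hb : b ≠ 0)
    (hx : x ∈ (Ideal.span {a} ⊔ Ideal.span {g}) ⊓ Ideal.span {b}) :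
    x ∈ Ideal.span {lcm a b} ⊔ Ideal.span {lcm g b} := by
  obtain ⟨h1, h2⟩ := Submodule.mem_inf.mp hx
  by_cases hg : g = 0
  · subst hg
    have h1' : x ∈ Ideal.span ({a} : Set R) := by
      simpa [Ideal.span_singleton_eq_bot.mpr rfl] using h1
    have : x ∈ Ideal.span {a} ⊓ Ideal.span {b} := Submodule.mem_inf.mpr ⟨h1', h2⟩
    rw [span_inf_span_singleton] at this
    exact Ideal.mem_sup_left this
  · have hsup : Ideal.span {a} ⊔ Ideal.span {g} = Ideal.span ({gcd a g} : Set R) := by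
      rw [span_gcd, Ideal.span_insert]
    rw [hsup, Ideal.mem_span_singleton] at h1
    rw [Ideal.mem_span_singleton] at h2
    have h3 : lcm (gcd a g) b ∣ x := lcm_dvd h1 h2
    have h4 : gcd (lcm a b) (lcm g b) ∣ x := (gcd_lcm_dvd_lcm_gcd ha hb).trans h3
    have : x ∈ Ideal.span ({gcd (lcm a b) (lcm g b)} : Set R) :=
      Ideal.mem_span_singleton.mpr h4
    rwa [span_gcd, Ideal.span_insert] at this

/-- Sublemma B: in a PID, the intersection of a finitely generated ideal with a
principal ideal is contained in the span of the pairwise lcms. -/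
theorem inf_span_le_span_lcm [IsPrincipalIdealRing R] [GCDMonoid R] {ι : Type*}
    (c : ι → R) (b : R) (hb : b ≠ 0) (s : Finset ι) (hc : ∀ t ∈ s, c t ≠ 0) :
    Ideal.span (c '' ↑s) ⊓ Ideal.span {b} ≤ Ideal.span ((fun t => lcm (c t) b) '' ↑s) := by
  classical
  induction s using Finset.induction_on with
  | empty => simp
  | @insert a s hnotmem IH =>
    intro x hx
    obtain ⟨g, hgspan⟩ := (IsPrincipalIdealRing.principal (Ideal.span (c '' ↑s))).principal
    have hxx : x ∈ (Ideal.span {c a} ⊔ Ideal.span {g}) ⊓ Ideal.span {b} := by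
      rwa [Finset.coe_insert, Set.image_insert_eq, Ideal.span_insert, hgspan] at hx
    have h2 := mem_lcm_sup_of_mem (hc a (Finset.mem_insert_self a s)) hb hxx
    have h3 : Ideal.span ({lcm (c a) b} : Set R) ≤
        Ideal.span ((fun t => lcm (c t) b) '' ↑(insert a s)) := by
      apply Ideal.span_mono
      simp only [Set.singleton_subset_iff, Finset.coe_insert, Set.image_insert_eq]
      exact Set.mem_insert _ _
    have h4 : Ideal.span ({lcm g b} : Set R) ≤
        Ideal.span ((fun t => lcm (c t) b) '' ↑(insert a s)) := by
      rw [← span_inf_span_singleton,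
        show Ideal.span ({g} : Set R) = Ideal.span (c '' ↑s) from hgspan.symm]
      refine le_trans (IH fun t ht => hc t (Finset.mem_insert_of_mem ht)) ?_
      apply Ideal.span_mono
      apply Set.image_mono
      simp
    exact (sup_le h3 h4) h2

theorem exists_sum_of_mem_span_image {ι : Type*} (g : ι → R) (s : Finset ι) {x : R}
    (hx : x ∈ Ideal.span (g '' ↑s)) : ∃ ρ : ι → R, x = ∑ t ∈ s, ρ t * g t := by
  classical
  induction hx using Submodule.span_induction with
  | mem y hy =>
    obtain ⟨t, ht, rfl⟩ := hy
    refine ⟨fun t' => if t' = t then 1 else 0, ?_⟩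
    have h : ∀ t' ∈ s, (if t' = t then (1:R) else 0) * g t' =
        if t' = t then g t else 0 := by
      intro t' _
      split <;> simp_all
    rw [Finset.sum_congr rfl h, Finset.sum_ite_eq' s t fun _ => g t,
      if_pos (Finset.mem_coe.mp ht)]
  | zero => exact ⟨0, by simp⟩
  | add y z _ _ hy hz =>
    obtain ⟨ρ₁, h₁⟩ := hy; obtain ⟨ρ₂, h₂⟩ := hz
    exact ⟨ρ₁ + ρ₂, by simp [h₁, h₂, add_mul, Finset.sum_add_distrib]⟩
  | smul r y _ hy =>
    obtain ⟨ρ, h⟩ := hy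
    exact ⟨fun t => r * ρ t, by simp [smul_eq_mul, h, Finset.mul_sum, mul_assoc]⟩

end RLevel


section LemA

variable {R : Type*} [CommRing R] [IsDomain R]

theorem IsLcmChoice.associated_lcm [GCDMonoid R] {a b l qa qb : R}
    (h : IsLcmChoice a b l qa qb) : Associated (lcm a b) l := by
  refine associated_of_dvd_dvd (lcm_dvd ⟨qa, h.1⟩ ⟨qb, h.2.1⟩)
    (h.2.2 _ (dvd_lcm_left a b) (dvd_lcm_right a b))

theorem span_image_congr {ι : Type*} {g1 g2 : ι → R} {s : Finset ι}
    (h : ∀ t ∈ s, Associated (g1 t) (g2 t)) :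
    Ideal.span (g1 '' ↑s) = Ideal.span (g2 '' ↑s) := by
  have key : ∀ (g1 g2 : ι → R), (∀ t ∈ s, g2 t ∣ g1 t) →
      Ideal.span (g1 '' ↑s) ≤ Ideal.span (g2 '' ↑s) := by
    intro g1 g2 hdvd
    rw [Ideal.span_le]
    rintro x ⟨t, ht, rfl⟩
    have ht' := Finset.mem_coe.mp ht
    obtain ⟨k, hk⟩ := hdvd t ht'
    rw [hk]
    exact Ideal.mul_mem_right _ _ (Ideal.subset_span ⟨t, ht, rfl⟩)
  exact le_antisymm (key _ _ fun t ht => ((h t ht).symm).dvd)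
    (key _ _ fun t ht => (h t ht).dvd)

theorem const_syzygy [IsPrincipalIdealRing R] [GCDMonoid R] {M : ℕ}
    (c : Fin M → R) (hc : ∀ t, c t ≠ 0)
    (l u v : Fin M → Fin M → R)
    (hlcm : ∀ i j, i < j → IsLcmChoice (c i) (c j) (l i j) (u i j) (v i j)) :
    ∀ (N : ℕ) (s : Finset (Fin M)), s.card ≤ N →
      ∀ h : Fin M → R, (∀ t, h t ≠ 0 → t ∈ s) → (∑ t, h t * c t = 0) →
      ∃ r : Fin M → Fin M → R,
        (∀ i j, r i j ≠ 0 → i < j ∧ i ∈ s ∧ j ∈ s) ∧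
        ∀ t, (∑ j, r t j * u t j) - (∑ i, r i t * v i t) = h t := by
  classical
  intro N
  induction N with
  | zero =>
    intro s hcard h hsupp _
    have hs : s = ∅ := Finset.card_eq_zero.mp (Nat.le_zero.mp hcard)
    refine ⟨0, by simp, fun t => ?_⟩
    have : h t = 0 := by
      by_contra hh
      simpa [hs] using hsupp t hh
    simp [this]
  | succ N IH =>
    intro s hcard h hsupp hsyz
    by_cases hzero : ∀ t, h t = 0
    · exact ⟨0, by simp, fun t => by simp [hzero t]⟩
    push_neg at hzero
    obtain ⟨t1, ht1⟩ := hzero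
    have hsne : s.Nonempty := ⟨t1, hsupp t1 ht1⟩
    set j0 := s.max' hsne with hj0
    have hj0mem : j0 ∈ s := s.max'_mem hsne
    have hcard' : (s.erase j0).card ≤ N := by
      have := Finset.card_erase_of_mem hj0mem
      have hpos : 0 < s.card := Finset.card_pos.mpr hsne
      omega
    have herase_lt : ∀ t ∈ s.erase j0, t < j0 := by
      intro t ht
      obtain ⟨hne, hts⟩ := Finset.mem_erase.mp ht
      exact lt_of_le_of_ne (s.le_max' t hts) hne
    by_cases hzj : h j0 = 0
    · have hsub : ∀ t, h t ≠ 0 → t ∈ s.erase j0 := fun t ht =>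
        Finset.mem_erase.mpr ⟨by rintro rfl; exact ht hzj, hsupp t ht⟩
      obtain ⟨r, hr1, hr2⟩ := IH (s.erase j0) hcard' h hsub hsyz
      exact ⟨r, fun i j hij => ⟨(hr1 i j hij).1,
        Finset.mem_of_mem_erase (hr1 i j hij).2.1,
        Finset.mem_of_mem_erase (hr1 i j hij).2.2⟩, hr2⟩
    · -- main case: clear the `j0` component
      have hsum_s : ∑ t ∈ s, h t * c t = 0 := by
        rw [← hsyz]
        refine Finset.sum_subset s.subset_univ fun t _ hts => ?_
        have : h t = 0 := by by_contra hh; exact hts (hsupp t hh)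
        simp [this]
      have hsplit : h j0 * c j0 + ∑ t ∈ s.erase j0, h t * c t = 0 := by
        rw [Finset.add_sum_erase s (fun t => h t * c t) hj0mem]
        exact hsum_s
      have hmem : h j0 * c j0 ∈ Ideal.span (c '' ↑(s.erase j0)) := by
        have heq : h j0 * c j0 = -∑ t ∈ s.erase j0, h t * c t := by
          rw [eq_neg_iff_add_eq_zero]; exact hsplit
        rw [heq]
        refine neg_mem (Ideal.sum_mem _ fun t ht => ?_)
        exact Ideal.mul_mem_left _ _ (Ideal.subset_span ⟨t, ht, rfl⟩)
      have hmem2 : h j0 * c j0 ∈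
          Ideal.span ((fun t => lcm (c t) (c j0)) '' ↑(s.erase j0)) := by
        refine inf_span_le_span_lcm c (c j0) (hc j0) (s.erase j0) (fun t _ => hc t) ?_
        exact Submodule.mem_inf.mpr ⟨hmem,
          Ideal.mem_span_singleton.mpr ⟨h j0, mul_comm _ _⟩⟩
      have hmem3 : h j0 * c j0 ∈ Ideal.span ((fun t => l t j0) '' ↑(s.erase j0)) := by
        rw [← span_image_congr (g1 := fun t => lcm (c t) (c j0)) (g2 := fun t => l t j0)
          (fun t ht => (hlcm t j0 (herase_lt t ht)).associated_lcm)]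
        exact hmem2
      obtain ⟨ρ, hρ⟩ := exists_sum_of_mem_span_image _ _ hmem3
      have hj0eq : h j0 = ∑ t ∈ s.erase j0, ρ t * v t j0 := by
        apply mul_left_cancel₀ (hc j0)
        rw [Finset.mul_sum]
        calc c j0 * h j0 = h j0 * c j0 := mul_comm _ _
          _ = ∑ t ∈ s.erase j0, ρ t * l t j0 := hρ
          _ = ∑ t ∈ s.erase j0, c j0 * (ρ t * v t j0) := by
              refine Finset.sum_congr rfl fun t ht => ?_
              rw [(hlcm t j0 (herase_lt t ht)).2.1]; ring
      set ρh : Fin M → Fin M → R :=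
        fun i j => if j = j0 ∧ i ∈ s.erase j0 then -ρ i else 0 with hρh
      set g : Fin M → R :=
        fun t => (∑ j, ρh t j * u t j) - (∑ i, ρh i t * v i t) with hg
      have hgj0 : g j0 = h j0 := by
        have h1 : (∑ j, ρh j0 j * u j0 j) = 0 := by
          apply Finset.sum_eq_zero
          intro j _
          have h0 : ρh j0 j = 0 := if_neg (fun hc => (Finset.notMem_erase j0 s) hc.2)
          rw [h0, zero_mul]
        have h2 : (∑ i, ρh i j0 * v i j0) = -∑ t ∈ s.erase j0, ρ t * v t j0 := by
          have hterm : ∀ i, ρh i j0 * v i j0 =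
              if i ∈ s.erase j0 then -(ρ i * v i j0) else 0 := by
            intro i
            by_cases hi : i ∈ s.erase j0
            · have h0 : ρh i j0 = -ρ i := if_pos ⟨rfl, hi⟩
              rw [h0, if_pos hi]
              ring
            · have h0 : ρh i j0 = 0 := if_neg (fun hc => hi hc.2)
              rw [h0, if_neg hi, zero_mul]
          rw [Finset.sum_congr rfl fun i _ => hterm i, Finset.sum_ite_mem,
            Finset.univ_inter, ← Finset.sum_neg_distrib]
        rw [hg]
        simp only [h1, h2, hj0eq]
        ring
      have hgout : ∀ t, t ≠ j0 → t ∉ s.erase j0 → g t = 0 := by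
        intro t htj hte
        have h1 : (∑ j, ρh t j * u t j) = 0 := by
          apply Finset.sum_eq_zero
          intro j _
          have hj : ¬(j = j0 ∧ t ∈ s.erase j0) := fun hc => hte hc.2
          have h0 : ρh t j = 0 := if_neg hj
          rw [h0, zero_mul]
        have h2 : (∑ i, ρh i t * v i t) = 0 := by
          apply Finset.sum_eq_zero
          intro i _
          have hcnd : ¬(t = j0 ∧ i ∈ s.erase j0) := fun hh => htj hh.1
          have h0 : ρh i t = 0 := if_neg hcnd
          rw [h0, zero_mul]
        simp [hg, h1, h2]
      have hgsyz : ∑ t, g t * c t = 0 := by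
        have key : ∀ i j, ρh i j * (u i j * c i) = ρh i j * (v i j * c j) := by
          intro i j
          by_cases hij : j = j0 ∧ i ∈ s.erase j0
          · obtain ⟨hj, hi⟩ := hij
            subst hj
            have hl := hlcm i j0 (herase_lt i hi)
            rw [mul_comm (u i j0), mul_comm (v i j0), ← hl.1, ← hl.2.1]
          · have h0 : ρh i j = 0 := if_neg hij
            rw [h0, zero_mul, zero_mul]
        calc ∑ t, g t * c t
            = (∑ t, ∑ j, ρh t j * (u t j * c t)) - (∑ t, ∑ i, ρh i t * (v i t * c t)) := by
              rw [← Finset.sum_sub_distrib]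
              refine Finset.sum_congr rfl fun t _ => ?_
              rw [hg]
              simp only [sub_mul, Finset.sum_mul]
              congr 1 <;> exact Finset.sum_congr rfl fun x _ => by ring
          _ = (∑ t, ∑ j, ρh t j * (u t j * c t)) - (∑ i, ∑ t, ρh i t * (v i t * c t)) := by
              rw [Finset.sum_comm (f := fun t i => ρh i t * (v i t * c t))]
          _ = 0 := by
              rw [← Finset.sum_sub_distrib]
              apply Finset.sum_eq_zero
              intro i _
              rw [← Finset.sum_sub_distrib]
              apply Finset.sum_eq_zero
              intro j _
              rw [key i j]
              ring
      set h' : Fin M → R := fun t => h t - g t with hh'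
      have hsupp' : ∀ t, h' t ≠ 0 → t ∈ s.erase j0 := by
        intro t ht
        by_contra hte
        apply ht
        by_cases htj : t = j0
        · subst htj; simp [hh', hgj0]
        · have h0 : h t = 0 := by
            by_contra hh
            have := hsupp t hh
            exact hte (Finset.mem_erase.mpr ⟨htj, this⟩)
          simp [hh', h0, hgout t htj hte]
      have hsyz' : ∑ t, h' t * c t = 0 := by
        simp only [hh', sub_mul]
        rw [Finset.sum_sub_distrib, hsyz, hgsyz, sub_zero]
      obtain ⟨r', hr1', hr2'⟩ := IH (s.erase j0) hcard' h' hsupp' hsyz'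
      refine ⟨fun i j => r' i j + ρh i j, ?_, ?_⟩
      · intro i j hij
        by_cases hr0 : r' i j ≠ 0
        · obtain ⟨h1, h2, h3⟩ := hr1' i j hr0
          exact ⟨h1, Finset.mem_of_mem_erase h2, Finset.mem_of_mem_erase h3⟩
        · push_neg at hr0
          have hne : ρh i j ≠ 0 := by
            intro hh
            apply hij
            show r' i j + ρh i j = 0
            rw [hr0, hh, add_zero]
          have hcond : j = j0 ∧ i ∈ s.erase j0 := by
            by_contra hcc
            exact hne (if_neg hcc)
          obtain ⟨hj, hi⟩ := hcond
          subst hj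
          exact ⟨herase_lt i hi, Finset.mem_of_mem_erase hi, hj0mem⟩
      · intro t
        show (∑ j, (r' t j + ρh t j) * u t j) - (∑ i, (r' i t + ρh i t) * v i t) = h t
        have expand : (∑ j, (r' t j + ρh t j) * u t j) - (∑ i, (r' i t + ρh i t) * v i t)
            = ((∑ j, r' t j * u t j) - (∑ i, r' i t * v i t))
              + ((∑ j, ρh t j * u t j) - (∑ i, ρh i t * v i t)) := by
          simp only [add_mul, Finset.sum_add_distrib]
          ring
        rw [expand, hr2' t]
        simp only [hh', hg]
        ring

end LemA

end AuxRLevel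

section PolyLemmas

open MvPolynomial
open scoped MonomialOrder

namespace PaperGB

variable {n : ℕ} {R : Type*} [CommSemiring R] (m : MonomialOrder (Fin n))

theorem toSyn_mDeg (f : MvPolynomial (Fin n) R) :
    m.toSyn (mDeg m f) = f.support.sup fun d => m.toSyn d :=
  m.toSyn.apply_symm_apply _

theorem le_toSyn_mDeg {f : MvPolynomial (Fin n) R} {d : Fin n →₀ ℕ} (h : d ∈ f.support) :
    m.toSyn d ≤ m.toSyn (mDeg m f) := by
  rw [toSyn_mDeg]
  exact Finset.le_sup h

theorem mDeg_zero : mDeg m (0 : MvPolynomial (Fin n) R) = 0 := by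
  rw [mDeg]
  rw [MvPolynomial.support_zero, Finset.sup_empty]
  rw [MonomialOrder.bot_eq_zero, map_zero]

theorem mDeg_mem_support {f : MvPolynomial (Fin n) R} (h : f ≠ 0) :
    mDeg m f ∈ f.support := by
  obtain ⟨b, hb, hsup⟩ := Finset.exists_mem_eq_sup f.support
    (MvPolynomial.support_nonempty.mpr h) fun d => m.toSyn d
  rw [mDeg, hsup, AddEquiv.symm_apply_apply]
  exact hb

theorem mLC_ne_zero {f : MvPolynomial (Fin n) R} (h : f ≠ 0) : mLC m f ≠ 0 :=
  MvPolynomial.mem_support_iff.mp (mDeg_mem_support m h)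

theorem coeff_eq_zero_of_mDeg_lt {f : MvPolynomial (Fin n) R} {d : Fin n →₀ ℕ}
    (h : m.toSyn (mDeg m f) < m.toSyn d) : f.coeff d = 0 := by
  by_contra hc
  exact absurd (le_toSyn_mDeg m (MvPolynomial.mem_support_iff.mpr hc)) (not_le.mpr h)

theorem exists_of_mem_support_mul {p q : MvPolynomial (Fin n) R} {e : Fin n →₀ ℕ}
    (h : e ∈ (p * q).support) :
    ∃ e1 ∈ p.support, ∃ e2 ∈ q.support, e1 + e2 = e := by
  classical
  have := MvPolynomial.support_mul p q h
  rwa [Finset.mem_add] at this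

theorem mDeg_mul_le (p q : MvPolynomial (Fin n) R) :
    m.toSyn (mDeg m (p * q)) ≤ m.toSyn (mDeg m p) + m.toSyn (mDeg m q) := by
  by_cases hpq : p * q = 0
  · rw [hpq, mDeg_zero, map_zero]
    have h1 : (0 : m.syn) ≤ m.toSyn (mDeg m p) := by
      rw [← MonomialOrder.bot_eq_zero]; exact bot_le
    have h2 : (0 : m.syn) ≤ m.toSyn (mDeg m q) := by
      rw [← MonomialOrder.bot_eq_zero]; exact bot_le
    calc (0 : m.syn) ≤ m.toSyn (mDeg m p) := h1
      _ ≤ _ := le_add_of_nonneg_right h2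
  · obtain ⟨e1, he1, e2, he2, heq⟩ := exists_of_mem_support_mul (mDeg_mem_support m hpq)
    calc m.toSyn (mDeg m (p * q)) = m.toSyn (e1 + e2) := by rw [heq]
      _ = m.toSyn e1 + m.toSyn e2 := map_add _ _ _
      _ ≤ _ := add_le_add (le_toSyn_mDeg m he1) (le_toSyn_mDeg m he2)

theorem coeff_mDeg_add_mDeg_mul (p q : MvPolynomial (Fin n) R) :
    (p * q).coeff (mDeg m p + mDeg m q) = mLC m p * mLC m q := by
  rw [MvPolynomial.coeff_mul]
  have hmem : ((mDeg m p, mDeg m q) : (Fin n →₀ ℕ) × (Fin n →₀ ℕ)) ∈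
      Finset.HasAntidiagonal.antidiagonal (mDeg m p + mDeg m q) :=
      Finset.HasAntidiagonal.mem_antidiagonal.mpr rfl
  rw [Finset.sum_eq_single_of_mem _ hmem]
  · rfl
  rintro ⟨b1, b2⟩ hm hne
  rw [Finset.HasAntidiagonal.mem_antidiagonal] at hm
  by_cases h1 : p.coeff b1 = 0
  · rw [h1, zero_mul]
  by_cases h2 : q.coeff b2 = 0
  · rw [h2, mul_zero]
  exfalso
  apply hne
  have hb1 : m.toSyn b1 ≤ m.toSyn (mDeg m p) :=
    le_toSyn_mDeg m (MvPolynomial.mem_support_iff.mpr h1)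
  have hb2 : m.toSyn b2 ≤ m.toSyn (mDeg m q) :=
    le_toSyn_mDeg m (MvPolynomial.mem_support_iff.mpr h2)
  have hsum : m.toSyn b1 + m.toSyn b2 = m.toSyn (mDeg m p) + m.toSyn (mDeg m q) := by
    rw [← map_add, ← map_add, hm]
  have e1 : m.toSyn b1 = m.toSyn (mDeg m p) := by
    by_contra hne'
    exact absurd hsum (ne_of_lt (add_lt_add_of_lt_of_le (lt_of_le_of_ne hb1 hne') hb2))
  have hb1' : b1 = mDeg m p := m.toSyn.injective e1
  have hb2' : b2 = mDeg m q := by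
    have h3 := hm
    rw [hb1'] at h3
    exact add_left_cancel h3
  rw [hb1', hb2']

theorem mem_support_of_mem_support_sum {ι : Type*} {s : Finset ι}
    {p : ι → MvPolynomial (Fin n) R} {e : Fin n →₀ ℕ}
    (h : e ∈ (∑ i ∈ s, p i).support) : ∃ i ∈ s, e ∈ (p i).support := by
  by_contra hc
  push_neg at hc
  have : (∑ i ∈ s, p i).coeff e = 0 := by
    rw [MvPolynomial.coeff_sum]
    exact Finset.sum_eq_zero fun i hi =>
      MvPolynomial.notMem_support_iff.mp (hc i hi)
  exact MvPolynomial.mem_support_iff.mp h this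

theorem toSyn_le_of_mem_support_monomial {e d : Fin n →₀ ℕ} {c : R}
    (h : e ∈ (monomial d c).support) : e = d := by
  classical
  have := MvPolynomial.support_monomial_subset h
  exact Finset.mem_singleton.mp this

section Domain

variable {R : Type*} [CommRing R] [IsDomain R]

theorem mem_support_of_mem_support_sub {p q : MvPolynomial (Fin n) R} {e : Fin n →₀ ℕ}
    (h : e ∈ (p - q).support) : e ∈ p.support ∪ q.support := by
  classical
  rw [Finset.mem_union]
  by_contra hc
  push_neg at hc
  obtain ⟨h1, h2⟩ := hc
  have := MvPolynomial.mem_support_iff.mp h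
  rw [MvPolynomial.coeff_sub, MvPolynomial.notMem_support_iff.mp h1,
    MvPolynomial.notMem_support_iff.mp h2, sub_zero] at this
  exact this rfl

theorem mDeg_mul {p q : MvPolynomial (Fin n) R} (hp : p ≠ 0) (hq : q ≠ 0) :
    mDeg m (p * q) = mDeg m p + mDeg m q := by
  have hne : (p * q).coeff (mDeg m p + mDeg m q) ≠ 0 := by
    rw [coeff_mDeg_add_mDeg_mul]
    exact mul_ne_zero (mLC_ne_zero m hp) (mLC_ne_zero m hq)
  have h1 : m.toSyn (mDeg m p + mDeg m q) ≤ m.toSyn (mDeg m (p * q)) :=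
    le_toSyn_mDeg m (MvPolynomial.mem_support_iff.mpr hne)
  have h2 : m.toSyn (mDeg m (p * q)) ≤ m.toSyn (mDeg m p + mDeg m q) := by
    rw [map_add]
    exact mDeg_mul_le m p q
  exact m.toSyn.injective (le_antisymm h2 h1)

theorem mLC_mul {p q : MvPolynomial (Fin n) R} (hp : p ≠ 0) (hq : q ≠ 0) :
    mLC m (p * q) = mLC m p * mLC m q := by
  rw [mLC, mDeg_mul m hp hq, coeff_mDeg_add_mDeg_mul]

end Domain

end PaperGB

end PolyLemmas



open PaperGB

section SPoly

open MvPolynomial PaperGB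
open scoped MonomialOrder

theorem sPoly_mDeg_lt {n : ℕ} {R : Type*} [CommRing R] [IsDomain R]
    (m : MonomialOrder (Fin n)) {M : ℕ} (f : Fin M → MvPolynomial (Fin n) R)
    (u v : Fin M → Fin M → R) (i j : Fin M)
    (hfi : f i ≠ 0) (hfj : f j ≠ 0)
    (hl : mLC m (f i) * u i j = mLC m (f j) * v i j)
    (hne : sPolyPID m f u v i j ≠ 0) :
    m.toSyn (mDeg m (sPolyPID m f u v i j)) < m.toSyn (mDeg m (f i) ⊔ mDeg m (f j)) := by
  set s := mDeg m (f i) ⊔ mDeg m (f j) with hs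
  have hcoeff : (sPolyPID m f u v i j).coeff s = 0 := by
    rw [sPolyPID, MvPolynomial.coeff_sub]
    have h1 : ((monomial (s - mDeg m (f i)) (u i j)) * f i).coeff s
        = u i j * mLC m (f i) := by
      have hle : mDeg m (f i) ≤ s := le_sup_left
      have hcm := MvPolynomial.coeff_monomial_mul (mDeg m (f i)) (s - mDeg m (f i))
        (u i j) (f i)
      rw [tsub_add_cancel_of_le hle] at hcm
      exact hcm
    have h2 : ((monomial (s - mDeg m (f j)) (v i j)) * f j).coeff s
        = v i j * mLC m (f j) := by
      have hle : mDeg m (f j) ≤ s := le_sup_right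
      have hcm := MvPolynomial.coeff_monomial_mul (mDeg m (f j)) (s - mDeg m (f j))
        (v i j) (f j)
      rw [tsub_add_cancel_of_le hle] at hcm
      exact hcm
    rw [h1, h2]
    have h3 : u i j * mLC m (f i) = v i j * mLC m (f j) := by
      rw [mul_comm, hl, mul_comm]
    rw [h3, sub_self]
  have hbound : ∀ e ∈ (sPolyPID m f u v i j).support, m.toSyn e ≤ m.toSyn s := by
    intro e he
    rw [sPolyPID] at he
    rcases Finset.mem_union.mp (mem_support_of_mem_support_sub he) with h | h
    · obtain ⟨e1, he1, e2, he2, heq⟩ := exists_of_mem_support_mul h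
      have he1' : e1 = s - mDeg m (f i) := toSyn_le_of_mem_support_monomial he1
      calc m.toSyn e = m.toSyn e1 + m.toSyn e2 := by rw [← heq, map_add]
        _ ≤ m.toSyn (s - mDeg m (f i)) + m.toSyn (mDeg m (f i)) := by
            rw [he1']
            exact add_le_add_right (le_toSyn_mDeg m he2) _
        _ = m.toSyn ((s - mDeg m (f i)) + mDeg m (f i)) := (map_add _ _ _).symm
        _ = m.toSyn s := by rw [tsub_add_cancel_of_le le_sup_left]
    · obtain ⟨e1, he1, e2, he2, heq⟩ := exists_of_mem_support_mul h
      have he1' : e1 = s - mDeg m (f j) := toSyn_le_of_mem_support_monomial he1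
      calc m.toSyn e = m.toSyn e1 + m.toSyn e2 := by rw [← heq, map_add]
        _ ≤ m.toSyn (s - mDeg m (f j)) + m.toSyn (mDeg m (f j)) := by
            rw [he1']
            exact add_le_add_right (le_toSyn_mDeg m he2) _
        _ = m.toSyn ((s - mDeg m (f j)) + mDeg m (f j)) := (map_add _ _ _).symm
        _ = m.toSyn s := by rw [tsub_add_cancel_of_le le_sup_right]
  have hsup : m.toSyn (mDeg m (sPolyPID m f u v i j)) ≤ m.toSyn s :=
    hbound _ (mDeg_mem_support m hne)
  refine lt_of_le_of_ne hsup fun hc => ?_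
  have hdeq : mDeg m (sPolyPID m f u v i j) = s := m.toSyn.injective hc
  exact (mLC_ne_zero m hne) (by rw [mLC, hdeq]; exact hcoeff)

end SPoly


/-- over a PID, the relations `r_{ij}` arising from the `S_R`-polynomials
of a Gröbner basis generate the syzygy module. -/
theorem syzygies_of_groebnerBasis_PID
    {n : ℕ} {R : Type*} [CommRing R] [IsDomain R] [IsPrincipalIdealRing R]
    (m : MonomialOrder (Fin n))
    {M : ℕ} (f : Fin M → MvPolynomial (Fin n) R)
    (hG : IsGroebnerBasis m (Ideal.span (Set.range f)) f)
    (l u v : Fin M → Fin M → R)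
    (hlcm : ∀ i j : Fin M, i < j →
      IsLcmChoice (mLC m (f i)) (mLC m (f j)) (l i j) (u i j) (v i j))
    (q : Fin M → Fin M → (Fin M → MvPolynomial (Fin n) R))
    (hq : ∀ i j : Fin M, i < j →
      sPolyPID m f u v i j = ∑ t, q i j t * f t ∧
      (∀ t, q i j t * f t ≠ 0 →
        mDeg m (q i j t) + mDeg m (f t) ≼[m] mDeg m (sPolyPID m f u v i j)) ∧
      (sPolyPID m f u v i j = 0 → q i j = 0))
    (rr : Fin M → Fin M → (Fin M → MvPolynomial (Fin n) R))
    (hrr : ∀ i j : Fin M, rr i j =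
      Pi.single i (MvPolynomial.monomial
        ((mDeg m (f i) ⊔ mDeg m (f j)) - mDeg m (f i)) (u i j))
      - Pi.single j (MvPolynomial.monomial
        ((mDeg m (f i) ⊔ mDeg m (f j)) - mDeg m (f j)) (v i j))
      - q i j)
    (w : Fin M → MvPolynomial (Fin n) R) :
    (∑ t, w t * f t = 0) ↔
      w ∈ Submodule.span (MvPolynomial (Fin n) R)
        {h | ∃ i j : Fin M, i < j ∧ h = rr i j} := by
  classical
  letI : NormalizationMonoid R := UniqueFactorizationMonoid.normalizationMonoid.toNormalizationMonoid
  letI : NormalizedGCDMonoid R := UniqueFactorizationMonoid.toNormalizedGCDMonoid R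
  obtain ⟨hf0, -, -⟩ := hG
  have hfc : ∀ t, mLC m (f t) ≠ 0 := fun t => mLC_ne_zero m (hf0 t)
  have hrrsyz : ∀ i j : Fin M, i < j → ∑ t, rr i j t * f t = 0 := by
    intro i j hij
    have hexp : ∀ t, rr i j t * f t =
        (if t = i then (MvPolynomial.monomial
          ((mDeg m (f i) ⊔ mDeg m (f j)) - mDeg m (f i)) (u i j)) * f t else 0)
        - (if t = j then (MvPolynomial.monomial
          ((mDeg m (f i) ⊔ mDeg m (f j)) - mDeg m (f j)) (v i j)) * f t else 0)
        - q i j t * f t := by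
      intro t
      rw [hrr i j]
      simp only [Pi.sub_apply, Pi.single_apply, sub_mul, ite_mul, zero_mul]
    rw [Finset.sum_congr rfl fun t _ => hexp t]
    simp only [Finset.sum_sub_distrib]
    rw [Finset.sum_ite_eq' Finset.univ i, Finset.sum_ite_eq' Finset.univ j]
    simp only [Finset.mem_univ, if_true]
    have hqq := (hq i j hij).1
    rw [sPolyPID] at hqq
    rw [← hqq, sub_self]
  constructor
  · -- hard direction: every syzygy is in the span
    intro hw
    suffices main : ∀ d : m.syn, ∀ ww : Fin M → MvPolynomial (Fin n) R,
        (∑ t, ww t * f t = 0) →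
        (Finset.univ.sup (fun t => if ww t = 0 then (0 : m.syn)
          else m.toSyn (mDeg m (ww t) + mDeg m (f t))) = d) →
        ww ∈ Submodule.span (MvPolynomial (Fin n) R)
          {h | ∃ i j : Fin M, i < j ∧ h = rr i j} by
      exact main _ w hw rfl
    intro d
    induction d using WellFoundedLT.induction with
    | ind d IH =>
    intro w hw hd
    by_cases hw0 : w = 0
    · rw [hw0]; exact Submodule.zero_mem _
    set δ : Fin n →₀ ℕ := m.toSyn.symm d with hδdef
    have hδd : m.toSyn δ = d := m.toSyn.apply_symm_apply d
    set T : Finset (Fin M) :=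
      Finset.univ.filter (fun t => w t ≠ 0 ∧ mDeg m (w t) + mDeg m (f t) = δ) with hT
    have hmemT : ∀ t, t ∈ T ↔ (w t ≠ 0 ∧ mDeg m (w t) + mDeg m (f t) = δ) := by
      intro t
      simp only [hT, Finset.mem_filter, Finset.mem_univ, true_and]
    have hle : ∀ t, w t ≠ 0 → m.toSyn (mDeg m (w t) + mDeg m (f t)) ≤ d := by
      intro t ht
      rw [← hd]
      have heq : (if w t = 0 then (0:m.syn)
          else m.toSyn (mDeg m (w t) + mDeg m (f t)))
          = m.toSyn (mDeg m (w t) + mDeg m (f t)) := if_neg ht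
      rw [← heq]
      exact Finset.le_sup (f := fun t => if w t = 0 then (0:m.syn)
        else m.toSyn (mDeg m (w t) + mDeg m (f t))) (Finset.mem_univ t)
    set h : Fin M → R := fun t => if t ∈ T then mLC m (w t) else 0 with hh
    have hcsyz : ∑ t, h t * mLC m (f t) = 0 := by
      have hco : MvPolynomial.coeff δ (∑ t, w t * f t) = 0 := by
        rw [hw]; exact MvPolynomial.coeff_zero δ
      rw [MvPolynomial.coeff_sum] at hco
      rw [← hco]
      refine Finset.sum_congr rfl fun t _ => ?_
      by_cases htT : t ∈ T
      · obtain ⟨hwt, heq⟩ := (hmemT t).mp htT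
        simp only [hh, if_pos htT]
        rw [← heq]
        exact (coeff_mDeg_add_mDeg_mul m (w t) (f t)).symm
      · simp only [hh, if_neg htT, zero_mul]
        by_cases hwt : w t = 0
        · rw [hwt, zero_mul, MvPolynomial.coeff_zero]
        · have hne : mDeg m (w t) + mDeg m (f t) ≠ δ :=
            fun hc => htT ((hmemT t).mpr ⟨hwt, hc⟩)
          have hlt : m.toSyn (mDeg m (w t * f t)) < m.toSyn δ := by
            rw [mDeg_mul m hwt (hf0 t)]
            refine lt_of_le_of_ne (by rw [hδd]; exact hle t hwt) fun hc => ?_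
            exact hne (m.toSyn.injective hc)
          exact (coeff_eq_zero_of_mDeg_lt m hlt).symm
    obtain ⟨r, hr1, hr2⟩ := const_syzygy (fun t => mLC m (f t)) hfc l u v
      (fun i j hij => hlcm i j hij) T.card T (le_refl _) h
      (fun t ht => by
        by_contra hmem
        exact ht (by simp only [hh, if_neg hmem])) hcsyz
    have hTle : ∀ t ∈ T, mDeg m (f t) ≤ δ := by
      intro t ht
      obtain ⟨hwt, heq⟩ := (hmemT t).mp ht
      calc mDeg m (f t) ≤ mDeg m (w t) + mDeg m (f t) := le_add_self
        _ = δ := heq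
    have hsuple : ∀ i j, r i j ≠ 0 → mDeg m (f i) ⊔ mDeg m (f j) ≤ δ := by
      intro i j hr
      obtain ⟨hij, hiT, hjT⟩ := hr1 i j hr
      exact sup_le (hTle i hiT) (hTle j hjT)
    set mon : Fin M → Fin M → MvPolynomial (Fin n) R :=
      fun i j => MvPolynomial.monomial (δ - (mDeg m (f i) ⊔ mDeg m (f j))) (r i j)
      with hmon
    set w' : Fin M → MvPolynomial (Fin n) R :=
      fun t => w t - ∑ i, ∑ j, mon i j * rr i j t with hw'def
    -- the collapse identity
    have hsum : ∀ t, ∑ i, ∑ j, mon i j * rr i j t =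
        (if t ∈ T then mLT m (w t) else 0) + -(∑ i, ∑ j, mon i j * q i j t) := by
      intro t
      have hrrt : ∀ i j, mon i j * rr i j t =
          (MvPolynomial.monomial (δ - mDeg m (f t)))
            (r i j * (if t = i then u i j else 0))
          - (MvPolynomial.monomial (δ - mDeg m (f t)))
            (r i j * (if t = j then v i j else 0))
          - mon i j * q i j t := by
        intro i j
        rw [hrr i j]
        simp only [Pi.sub_apply, Pi.single_apply]
        rw [mul_sub, mul_sub]
        congr 2
        · by_cases hti : t = i
          · rw [if_pos hti, if_pos hti]
            by_cases hr0 : r i j = 0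
            · simp only [hmon, hr0, map_zero, zero_mul, mul_zero]
            · simp only [hmon]
              rw [MvPolynomial.monomial_mul, hti,
                tsub_add_tsub_cancel (hsuple i j hr0) le_sup_left]
          · rw [if_neg hti, if_neg hti, mul_zero, mul_zero, map_zero]
        · by_cases htj : t = j
          · rw [if_pos htj, if_pos htj]
            by_cases hr0 : r i j = 0
            · simp only [hmon, hr0, map_zero, zero_mul, mul_zero]
            · simp only [hmon]
              rw [MvPolynomial.monomial_mul, htj,
                tsub_add_tsub_cancel (hsuple i j hr0) le_sup_right]
          · rw [if_neg htj, if_neg htj, mul_zero, mul_zero, map_zero]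
      rw [Finset.sum_congr rfl fun i _ =>
        Finset.sum_congr rfl fun j _ => hrrt i j]
      simp only [Finset.sum_sub_distrib]
      have hA : ∑ i, ∑ j, (MvPolynomial.monomial (δ - mDeg m (f t)))
          (r i j * (if t = i then u i j else 0))
          = (MvPolynomial.monomial (δ - mDeg m (f t))) (∑ j, r t j * u t j) := by
        rw [Finset.sum_congr rfl fun i (_ : i ∈ Finset.univ) =>
          (map_sum (MvPolynomial.monomial (δ - mDeg m (f t)))
            (fun j => r i j * (if t = i then u i j else 0)) Finset.univ).symm]
        rw [← map_sum]
        congr 1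
        have e2 : ∀ i, (∑ j, r i j * (if t = i then u i j else 0))
            = if i = t then ∑ j, r i j * u i j else 0 := by
          intro i
          by_cases hti : t = i
          · rw [if_pos hti.symm]
            exact Finset.sum_congr rfl fun j _ => by rw [if_pos hti]
          · rw [if_neg (Ne.symm hti)]
            exact Finset.sum_eq_zero fun j _ => by rw [if_neg hti, mul_zero]
        rw [Finset.sum_congr rfl fun i _ => e2 i,
          Finset.sum_ite_eq' Finset.univ t fun i => ∑ j, r i j * u i j,
          if_pos (Finset.mem_univ t)]
      have hB : ∑ i, ∑ j, (MvPolynomial.monomial (δ - mDeg m (f t)))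
          (r i j * (if t = j then v i j else 0))
          = (MvPolynomial.monomial (δ - mDeg m (f t))) (∑ i, r i t * v i t) := by
        rw [Finset.sum_congr rfl fun i (_ : i ∈ Finset.univ) =>
          (map_sum (MvPolynomial.monomial (δ - mDeg m (f t)))
            (fun j => r i j * (if t = j then v i j else 0)) Finset.univ).symm]
        rw [← map_sum]
        congr 1
        have e2 : ∀ i, (∑ j, r i j * (if t = j then v i j else 0))
            = r i t * v i t := by
          intro i
          have e3 : ∀ j, r i j * (if t = j then v i j else 0)
              = if t = j then r i j * v i j else 0 := by
            intro j
            by_cases htj : t = j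
            · rw [if_pos htj, if_pos htj]
            · rw [if_neg htj, if_neg htj, mul_zero]
          rw [Finset.sum_congr rfl fun j _ => e3 j,
            Finset.sum_ite_eq Finset.univ t fun j => r i j * v i j,
            if_pos (Finset.mem_univ t)]
        rw [Finset.sum_congr rfl fun i _ => e2 i]
      rw [hA, hB, ← map_sub, hr2 t, sub_eq_add_neg]
      congr 1
      by_cases htT : t ∈ T
      · obtain ⟨hwt, heq⟩ := (hmemT t).mp htT
        simp only [hh, if_pos htT]
        have hdeg : δ - mDeg m (f t) = mDeg m (w t) := by
          rw [← heq, add_tsub_cancel_right]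
        rw [hdeg, mLT]
      · simp only [hh, if_neg htT, map_zero]
    have hkey : ∀ t, w' t = (w t - (if t ∈ T then mLT m (w t) else 0))
        + ∑ i, ∑ j, mon i j * q i j t := by
      intro t
      simp only [hw'def]
      rw [hsum t]
      ring
    -- degree bound for w'
    have hbound : ∀ t, ∀ e ∈ (w' t).support,
        m.toSyn e + m.toSyn (mDeg m (f t)) < d := by
      intro t e he
      rw [hkey t] at he
      rcases Finset.mem_union.mp (MvPolynomial.support_add he) with hA | hB
      · by_cases htT : t ∈ T
        · rw [if_pos htT] at hA
          obtain ⟨hwt, heq⟩ := (hmemT t).mp htT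
          have hne : e ≠ mDeg m (w t) := by
            intro hc
            have hz : (w t - mLT m (w t)).coeff e = 0 := by
              rw [hc, MvPolynomial.coeff_sub, mLT, MvPolynomial.coeff_monomial,
                if_pos rfl, mLC, sub_self]
            exact MvPolynomial.mem_support_iff.mp hA hz
          have hmem : e ∈ (w t).support := by
            rcases Finset.mem_union.mp (mem_support_of_mem_support_sub hA) with h1 | h1
            · exact h1
            · exact absurd (toSyn_le_of_mem_support_monomial h1) hne
          have hlt : m.toSyn e < m.toSyn (mDeg m (w t)) :=
            lt_of_le_of_ne (le_toSyn_mDeg m hmem)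
              fun hc => hne (m.toSyn.injective hc)
          calc m.toSyn e + m.toSyn (mDeg m (f t))
              < m.toSyn (mDeg m (w t)) + m.toSyn (mDeg m (f t)) :=
                add_lt_add_left hlt _
            _ = m.toSyn (mDeg m (w t) + mDeg m (f t)) := (map_add _ _ _).symm
            _ = d := by rw [heq, hδd]
        · rw [if_neg htT, sub_zero] at hA
          have hwt : w t ≠ 0 := by
            intro hc
            rw [hc, MvPolynomial.support_zero] at hA
            exact absurd hA (Finset.notMem_empty e)
          have h3 : mDeg m (w t) + mDeg m (f t) ≠ δ :=
            fun hc => htT ((hmemT t).mpr ⟨hwt, hc⟩)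
          have h4 : m.toSyn (mDeg m (w t) + mDeg m (f t)) < d := by
            refine lt_of_le_of_ne (hle t hwt) fun hc => ?_
            exact h3 (m.toSyn.injective (by rw [hc, hδd]))
          calc m.toSyn e + m.toSyn (mDeg m (f t))
              ≤ m.toSyn (mDeg m (w t)) + m.toSyn (mDeg m (f t)) :=
                add_le_add_left (le_toSyn_mDeg m hA) _
            _ = m.toSyn (mDeg m (w t) + mDeg m (f t)) := (map_add _ _ _).symm
            _ < d := h4
      · obtain ⟨i, -, hBi⟩ := mem_support_of_mem_support_sum hB
        obtain ⟨j, -, hBij⟩ := mem_support_of_mem_support_sum hBi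
        have hr0 : r i j ≠ 0 := by
          intro hc
          apply absurd hBij
          simp only [hmon, hc, map_zero, zero_mul, MvPolynomial.support_zero]
          exact Finset.notMem_empty e
        obtain ⟨hij, hiT, hjT⟩ := hr1 i j hr0
        obtain ⟨e1, he1, e2, he2, heq⟩ := exists_of_mem_support_mul hBij
        have he1' : e1 = δ - (mDeg m (f i) ⊔ mDeg m (f j)) := by
          apply toSyn_le_of_mem_support_monomial (c := r i j)
          simpa only [hmon] using he1
        have hq0 : q i j t ≠ 0 := by
          intro hc
          rw [hc, MvPolynomial.support_zero] at he2
          exact absurd he2 (Finset.notMem_empty e2)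
        have hsne : sPolyPID m f u v i j ≠ 0 := by
          intro hc
          exact hq0 (by simpa using congrFun ((hq i j hij).2.2 hc) t)
        have hqdeg := (hq i j hij).2.1 t (mul_ne_zero hq0 (hf0 t))
        have hlcm_eq : mLC m (f i) * u i j = mLC m (f j) * v i j :=
          (hlcm i j hij).1.symm.trans (hlcm i j hij).2.1
        have hslt := sPoly_mDeg_lt m f u v i j (hf0 i) (hf0 j) hlcm_eq hsne
        have hsupδ : mDeg m (f i) ⊔ mDeg m (f j) ≤ δ := hsuple i j hr0
        calc m.toSyn e + m.toSyn (mDeg m (f t))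
            = m.toSyn e1 + (m.toSyn e2 + m.toSyn (mDeg m (f t))) := by
              rw [← heq, map_add, add_assoc]
          _ ≤ m.toSyn e1 + (m.toSyn (mDeg m (q i j t)) + m.toSyn (mDeg m (f t))) :=
              add_le_add_right (add_le_add_left (le_toSyn_mDeg m he2) _) _
          _ = m.toSyn e1 + m.toSyn (mDeg m (q i j t) + mDeg m (f t)) := by
              rw [map_add]
          _ ≤ m.toSyn e1 + m.toSyn (mDeg m (sPolyPID m f u v i j)) :=
              add_le_add_right hqdeg _
          _ < m.toSyn e1 + m.toSyn (mDeg m (f i) ⊔ mDeg m (f j)) :=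
              add_lt_add_right hslt _
          _ = m.toSyn (e1 + (mDeg m (f i) ⊔ mDeg m (f j))) := (map_add _ _ _).symm
          _ = m.toSyn δ := by rw [he1', tsub_add_cancel_of_le hsupδ]
          _ = d := hδd
    -- w' is a syzygy
    have hw'syz : ∑ t, w' t * f t = 0 := by
      have hsplit : ∑ t, w' t * f t
          = (∑ t, w t * f t) - ∑ t, ∑ i, ∑ j, mon i j * rr i j t * f t := by
        rw [← Finset.sum_sub_distrib]
        refine Finset.sum_congr rfl fun t _ => ?_
        simp only [hw'def]
        rw [sub_mul, Finset.sum_mul]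
        congr 1
        exact Finset.sum_congr rfl fun i _ => Finset.sum_mul _ _ _
      rw [hsplit, hw, zero_sub, neg_eq_zero]
      rw [Finset.sum_comm]
      refine Finset.sum_eq_zero fun i _ => ?_
      rw [Finset.sum_comm]
      refine Finset.sum_eq_zero fun j _ => ?_
      by_cases hr0 : r i j = 0
      · refine Finset.sum_eq_zero fun t _ => ?_
        simp only [hmon, hr0, map_zero, zero_mul]
      · have hij := (hr1 i j hr0).1
        have hfact : ∑ t, mon i j * rr i j t * f t
            = mon i j * ∑ t, rr i j t * f t := by
          rw [Finset.mul_sum]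
          exact Finset.sum_congr rfl fun t _ => mul_assoc _ _ _
        rw [hfact, hrrsyz i j hij, mul_zero]
    -- conclude by induction
    have hw'mem : w' ∈ Submodule.span (MvPolynomial (Fin n) R)
        {h | ∃ i j : Fin M, i < j ∧ h = rr i j} := by
      by_cases hw'0 : w' = 0
      · rw [hw'0]; exact Submodule.zero_mem _
      · have hex : ∃ t, w' t ≠ 0 := by
          by_contra hc
          push_neg at hc
          exact hw'0 (funext hc)
        obtain ⟨t0, ht0⟩ := hex
        have hd0 : (0 : m.syn) < d := by
          have hb := hbound t0 (mDeg m (w' t0)) (mDeg_mem_support m ht0)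
          calc (0:m.syn) ≤ m.toSyn (mDeg m (w' t0)) + m.toSyn (mDeg m (f t0)) := by
                rw [← MonomialOrder.bot_eq_zero]; exact bot_le
            _ < d := hb
        have hd'lt : Finset.univ.sup (fun t => if w' t = 0 then (0:m.syn)
            else m.toSyn (mDeg m (w' t) + mDeg m (f t))) < d := by
          rw [Finset.sup_lt_iff (by rw [MonomialOrder.bot_eq_zero]; exact hd0)]
          intro t _
          by_cases h0 : w' t = 0
          · rw [if_pos h0]; exact hd0
          · rw [if_neg h0, map_add]
            exact hbound t (mDeg m (w' t)) (mDeg_mem_support m h0)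
        exact IH _ hd'lt w' hw'syz rfl
    have hcorr : (fun t => ∑ i, ∑ j, mon i j * rr i j t) ∈
        Submodule.span (MvPolynomial (Fin n) R)
          {h | ∃ i j : Fin M, i < j ∧ h = rr i j} := by
      have hfn : (fun t => ∑ i, ∑ j, mon i j * rr i j t)
          = ∑ i, ∑ j, mon i j • rr i j := by
        funext t
        rw [Finset.sum_apply]
        refine Finset.sum_congr rfl fun i _ => ?_
        rw [Finset.sum_apply]
        exact Finset.sum_congr rfl fun j _ => rfl
      rw [hfn]
      refine Submodule.sum_mem _ fun i _ => Submodule.sum_mem _ fun j _ => ?_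
      by_cases hr0 : r i j = 0
      · simp only [hmon, hr0, map_zero, zero_smul]
        exact Submodule.zero_mem _
      · exact Submodule.smul_mem _ _
          (Submodule.subset_span ⟨i, j, (hr1 i j hr0).1, rfl⟩)
    have hWsum : w = w' + (fun t => ∑ i, ∑ j, mon i j * rr i j t) := by
      funext t
      rw [Pi.add_apply]
      simp only [hw'def]
      ring
    rw [hWsum]
    exact Submodule.add_mem _ hw'mem hcorr
  · -- easy direction: the span consists of syzygies
    intro hmem
    induction hmem using Submodule.span_induction with
    | mem x hx =>
      obtain ⟨i, j, hij, rfl⟩ := hx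
      exact hrrsyz i j hij
    | zero => simp
    | add x y _ _ hx hy =>
      have hsplit : ∑ t, (x + y) t * f t
          = (∑ t, x t * f t) + ∑ t, y t * f t := by
        rw [← Finset.sum_add_distrib]
        exact Finset.sum_congr rfl fun t _ => by rw [Pi.add_apply, add_mul]
      rw [hsplit, hx, hy, add_zero]
    | smul c x _ hx =>
      have hsplit : ∑ t, (c • x) t * f t = c * ∑ t, x t * f t := by
        rw [Finset.mul_sum]
        exact Finset.sum_congr rfl fun t _ => by
          rw [Pi.smul_apply, smul_eq_mul, mul_assoc]
      rw [hsplit, hx, mul_zero]
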